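/- Let φ ∈ O_K[x] be an Eisenstein polynomial of degree n with root α and ramification polynomial ρ. If (p^s, J) with s ≥ 1 and J > 0 is a point on the ramification polygon of φ (i.e. v_α(ρ_{p^s}) = J and (p^s, J) lies on the lower convex hull of the points (i, v_α(ρ_i))), then p^s divides J. Equivalently, the key inequality proved is: writing J = a·n + b with 0 < b < n, if t := v_p(b) < s then v_α(ρ_{p^t}) ≤ J, so (p^s, J) could not lie on the polygon. -/

import Mathlib

open Polynomial

namespace RamificationStmt8

variable {K L : Type*} [Field K] [Field L]

def IsEisenstein (v : AddValuation K (WithTop ℤ)) (φ : Polynomial K) : Prop :=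
  φ.Monic ∧ (∀ i < φ.natDegree, ((1 : ℤ) : WithTop ℤ) ≤ v (φ.coeff i)) ∧
    v (φ.coeff 0) = ((1 : ℤ) : WithTop ℤ)

/-- Coefficients of the ramification polynomial `ρ(x) = φ(αx+α)/α^n`. -/
noncomputable def rho [Algebra K L] (φ : Polynomial K) (α : L) (n i : ℕ) : L :=
  ∑ k ∈ Finset.Icc i n, (Nat.choose k i : L) * (algebraMap K L (φ.coeff k)) * α ^ ((k : ℤ) - (n : ℤ))

/-- `(x0, J)` is a point on the ramification polygon (on the lower convex hull of the points
`(i, v_α(ρ_i))`, `1 ≤ i ≤ n`). -/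
def OnRamPolygon (w : AddValuation L (WithTop ℤ)) (ρ : ℕ → L) (n x0 : ℕ) (J : ℤ) : Prop :=
  w (ρ x0) = (J : WithTop ℤ) ∧
    ∃ lam : ℚ, ∀ i : ℕ, 1 ≤ i → i ≤ n → ∀ c : ℤ, w (ρ i) = (c : WithTop ℤ) →
      (J : ℚ) + lam * ((i : ℚ) - (x0 : ℚ)) ≤ (c : ℚ)

end RamificationStmt8

/-- Kummer: `p` does not divide `choose b (p^t)` when `t = v_p(b)`. -/
lemma stmt8_kummer_not_dvd {p : ℕ} (hp : p.Prime) {b : ℕ} (hb : 0 < b) :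
    ¬ p ∣ Nat.choose b (p ^ padicValNat p b) := by
  haveI : Fact p.Prime := ⟨hp⟩
  set t := padicValNat p b with ht
  have hdvd : p ^ t ∣ b := pow_padicValNat_dvd
  have hle : p ^ t ≤ b := Nat.le_of_dvd hb hdvd
  set u := b / p ^ t with hu
  have hbu : b = p ^ t * u := (Nat.mul_div_cancel' hdvd).symm
  have hu0 : 0 < u := by
    rcases Nat.eq_zero_or_pos u with h | h
    · rw [h, mul_zero] at hbu; omega
    · exact h
  have hpu : ¬ p ∣ u := by
    intro ⟨c, hc⟩
    have : p ^ (t + 1) ∣ b := by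
      refine ⟨c, ?_⟩
      rw [hbu, hc, pow_succ]; ring
    exact pow_succ_padicValNat_not_dvd hb.ne' this
  have hsub : b - p ^ t = p ^ t * (u - 1) := by
    rw [hbu, Nat.mul_sub, mul_one]
  have hval : padicValNat p (Nat.choose b (p ^ t)) = 0 := by
    rw [padicValNat_choose hle (Nat.lt_succ_self _)]
    rw [Finset.card_eq_zero, Finset.filter_eq_empty_iff]
    intro i hi
    simp only [Finset.mem_Ico] at hi
    rcases le_or_gt i t with hit | hit
    · -- i ≤ t : both remainders are 0
      have hdi : p ^ i ∣ p ^ t := pow_dvd_pow p hit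
      have h1 : p ^ t % p ^ i = 0 := Nat.mod_eq_zero_of_dvd hdi
      have h2 : (b - p ^ t) % p ^ i = 0 :=
        Nat.mod_eq_zero_of_dvd (hdi.trans (hsub ▸ Dvd.intro _ rfl))
      have hpi : 0 < p ^ i := Nat.pow_pos hp.pos
      rw [h1, h2]
      omega
    · -- t < i
      have hpi : 0 < p ^ i := Nat.pow_pos hp.pos
      have h1 : p ^ t % p ^ i = p ^ t := Nat.mod_eq_of_lt (Nat.pow_lt_pow_right hp.one_lt hit)
      have h2 : (b - p ^ t) % p ^ i = p ^ t * ((u - 1) % p ^ (i - t)) := by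
        rw [hsub, show p ^ i = p ^ t * p ^ (i - t) by rw [← pow_add]; congr 1; omega,
          Nat.mul_mod_mul_left]
      rw [h1, h2, show p ^ i = p ^ t * p ^ (i - t) by rw [← pow_add]; congr 1; omega]
      intro hcontra
      set q := p ^ (i - t) with hq
      have hq1 : 1 ≤ q := Nat.one_le_iff_ne_zero.mpr (pow_ne_zero _ hp.pos.ne')
      have hpt : 0 < p ^ t := Nat.pow_pos hp.pos
      have hle' : q ≤ 1 + (u - 1) % q := by
        have : p ^ t * q ≤ p ^ t * (1 + (u - 1) % q) := by
          calc p ^ t * q ≤ p ^ t + p ^ t * ((u - 1) % q) := hcontra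
            _ = p ^ t * (1 + (u - 1) % q) := by ring
        exact Nat.le_of_mul_le_mul_left this hpt
      have hlt : (u - 1) % q < q := Nat.mod_lt _ (by omega)
      have heq : (u - 1) % q = q - 1 := by omega
      have hqu : q ∣ u := by
        have := Nat.div_add_mod (u - 1) q
        refine ⟨(u - 1) / q + 1, ?_⟩
        have hexp : q * ((u - 1) / q + 1) = q * ((u - 1) / q) + q := by ring
        omega
      have hpq : p ∣ q := by
        rw [hq]
        exact dvd_pow_self p (by omega)
      exact hpu (hpq.trans hqu)
  intro hdvd'
  rcases padicValNat.eq_zero_iff.mp hval with h | h | h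
  · exact hp.one_lt.ne' h
  · exact (Nat.choose_pos hle).ne' h
  · exact h hdvd'

/-- Valuation of a sum whose (finite) term valuations are pairwise distinct equals the min. -/
lemma stmt8_addval_sum_eq_inf {L : Type*} [Field L] (w : AddValuation L (WithTop ℤ))
    {ι : Type*} (S : Finset ι) (f : ι → L)
    (hdist : ∀ k ∈ S, ∀ k' ∈ S, k ≠ k' → w (f k) = w (f k') → w (f k) = ⊤) :
    w (∑ k ∈ S, f k) = S.inf fun k => w (f k) := by
  classical
  induction S using Finset.induction with
  | empty => simp
  | @insert a S ha ih =>
    rw [Finset.sum_insert ha, Finset.inf_insert]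
    have ih' := ih (fun k hk k' hk' hne heq =>
      hdist k (Finset.mem_insert_of_mem hk) k' (Finset.mem_insert_of_mem hk') hne heq)
    rcases lt_trichotomy (w (f a)) (w (∑ k ∈ S, f k)) with h | h | h
    · rw [w.map_add_eq_of_lt_left h, min_eq_left (le_of_lt (ih' ▸ h))]
    · rw [ih'] at h
      by_cases htop : w (f a) = ⊤
      · have hStop : w (∑ k ∈ S, f k) = ⊤ := by rw [ih', ← h, htop]
        have hsum : w (f a + ∑ k ∈ S, f k) = ⊤ := by
          rw [w.top_iff] at htop hStop ⊢
          rw [htop, hStop, add_zero]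
        rw [hsum, htop, ← ih', hStop]
        simp
      · exfalso
        have hSne : S.Nonempty := by
          by_contra hse
          rw [Finset.not_nonempty_iff_eq_empty] at hse
          subst hse
          simp at h
          exact htop (w.top_iff.mpr h)
        obtain ⟨k, hk, hkeq⟩ := Finset.exists_mem_eq_inf S hSne (fun k => w (f k))
        have : w (f a) = w (f k) := by rw [h, hkeq]
        exact htop (hdist a (Finset.mem_insert_self a S) k (Finset.mem_insert_of_mem hk)
          (fun hak => ha (hak ▸ hk)) this)
    · rw [w.map_add_eq_of_lt_right h, min_eq_right (le_of_lt (ih' ▸ h)), ih']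

open RamificationStmt8 in
/-- Let `φ ∈ O_K[x]` be Eisenstein of degree `n` with root `α` and ramification
polynomial `ρ`.  If `(p^s, J)` with `s ≥ 1` and `J > 0` is a point on the ramification polygon of
`φ`, then `p^s ∣ J`.  Moreover (the key inequality): writing `J = a·n + b` with `0 < b < n`, if
`t := v_p(b) < s` then `v_α(ρ_{p^t}) ≤ J`. -/
theorem stmt8 {p : ℕ} (hp : p.Prime) {K L : Type*} [Field K] [CharZero K] [Field L] [Algebra K L]
    (v : AddValuation K (WithTop ℤ)) (π : K) (hπ : v π = ((1 : ℤ) : WithTop ℤ))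
    (hresidue_char : 0 < v (p : K))
    (w : AddValuation L (WithTop ℤ))
    (φ : Polynomial K) (n : ℕ) (hn : 0 < n) (hdeg : φ.natDegree = n)
    (hEis : IsEisenstein v φ)
    (α : L) (hroot : Polynomial.aeval α φ = 0) (hα : w α = ((1 : ℤ) : WithTop ℤ))
    (hcompat : ∀ x : K, w (algebraMap K L x) = n • v x)
    (s : ℕ) (hs : 1 ≤ s) (J : ℤ) (hJ : 0 < J)
    (hon : OnRamPolygon w (fun i => rho φ α n i) n (p ^ s) J) :
    (p : ℤ) ^ s ∣ J ∧
      ∀ (a : ℤ) (b : ℕ), J = a * n + b → 0 < b → b < n → padicValNat p b < s →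
        w (rho φ α n (p ^ padicValNat p b)) ≤ (J : WithTop ℤ) := by
  haveI : Fact p.Prime := ⟨hp⟩
  obtain ⟨hmonic, hEis1, hEis0⟩ := hEis
  -- coercion helpers
  have hsmul_coe : ∀ (m : ℕ) (z : ℤ), m • ((z : ℤ) : WithTop ℤ) = ((m * z : ℤ) : WithTop ℤ) := by
    intro m z
    induction m with
    | zero => simp
    | succ m ih =>
      rw [succ_nsmul, ih, ← WithTop.coe_add]
      congr 1
      push_cast
      ring
  have hsmul_top : n • (⊤ : WithTop ℤ) = ⊤ := by
    obtain ⟨m, rfl⟩ := Nat.exists_eq_add_of_lt hn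
    rw [succ_nsmul, add_top]
  -- nonnegativity of v on ℕ and ℤ
  have hvnat : ∀ m : ℕ, (0 : WithTop ℤ) ≤ v (m : K) := by
    intro m
    induction m with
    | zero => simp [v.map_zero]
    | succ m ih =>
      have : ((m + 1 : ℕ) : K) = (m : K) + 1 := by push_cast; ring
      rw [this]
      exact v.map_le_add ih (by rw [v.map_one])
  have hvint : ∀ z : ℤ, (0 : WithTop ℤ) ≤ v ((z : ℤ) : K) := by
    intro z
    rcases Int.natAbs_eq z with h | h
    · rw [h, Int.cast_natCast]; exact hvnat _
    · rw [h, Int.cast_neg, v.map_neg, Int.cast_natCast]; exact hvnat _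
  have hvcop : ∀ u : ℕ, ¬ p ∣ u → v ((u : ℕ) : K) = 0 := by
    intro u hpu
    have hg : Nat.gcd p u = 1 := hp.coprime_iff_not_dvd.mpr hpu
    have hb := Nat.gcd_eq_gcd_ab p u
    rw [hg] at hb
    have h1 : (1 : K) = (p : K) * ((Nat.gcdA p u : ℤ) : K) + (u : K) * ((Nat.gcdB p u : ℤ) : K) := by
      have := congrArg (fun z : ℤ => (z : K)) hb
      push_cast at this
      convert this using 2 <;> push_cast <;> ring
    have hmin : min (v ((p : K) * ((Nat.gcdA p u : ℤ) : K)))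
        (v ((u : K) * ((Nat.gcdB p u : ℤ) : K))) ≤ 0 := by
      calc _ ≤ v ((p : K) * ((Nat.gcdA p u : ℤ) : K) + (u : K) * ((Nat.gcdB p u : ℤ) : K)) :=
            v.map_add _ _
        _ = v 1 := by rw [← h1]
        _ = 0 := v.map_one
    have hpA : 0 < v ((p : K) * ((Nat.gcdA p u : ℤ) : K)) := by
      rw [v.map_mul]
      exact add_pos_of_pos_of_nonneg hresidue_char (hvint _)
    have huB : v ((u : K) * ((Nat.gcdB p u : ℤ) : K)) ≤ 0 := by
      by_contra hcon
      push_neg at hcon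
      exact absurd hmin (not_le.mpr (lt_min hpA hcon))
    rw [v.map_mul] at huB
    have hvu : v ((u : ℕ) : K) ≤ 0 :=
      le_trans (le_add_of_nonneg_right (hvint _)) huB
    exact le_antisymm hvu (hvnat u)
  -- coefficient valuations are nonnegative
  have hcoeff_n : φ.coeff n = 1 := by
    rw [← hdeg]; exact hmonic.coeff_natDegree
  have hvcoeff : ∀ k, k ≤ n → (0 : WithTop ℤ) ≤ v (φ.coeff k) := by
    intro k hk
    rcases eq_or_lt_of_le hk with h | h
    · rw [h, hcoeff_n, v.map_one]
    · refine le_trans ?_ (hEis1 k (hdeg ▸ h))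
      exact_mod_cast (by norm_num : (0:ℤ) ≤ 1)
  -- valuation of each term of ρ
  have hterm : ∀ i k : ℕ, 1 ≤ i → k ≤ n →
      w ((Nat.choose k i : L) * algebraMap K L (φ.coeff k) * α ^ ((k : ℤ) - (n : ℤ)))
        = n • v ((Nat.choose k i : K) * φ.coeff k) + (((k : ℤ) - (n : ℤ) : ℤ) : WithTop ℤ) := by
    intro i k hi hk
    have hzpow : w (α ^ ((k : ℤ) - (n : ℤ))) = (((k : ℤ) - (n : ℤ) : ℤ) : WithTop ℤ) := by
      have h1 : ((k : ℤ) - (n : ℤ)) = -(((n - k : ℕ) : ℤ)) := by omega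
      rw [h1, zpow_neg, zpow_natCast, w.map_inv, w.map_pow, hα, hsmul_coe,
        ← WithTop.LinearOrderedAddCommGroup.coe_neg]
      congr 1
      omega
    have hC : (Nat.choose k i : L) = algebraMap K L ((Nat.choose k i : ℕ) : K) :=
      (map_natCast (algebraMap K L) _).symm
    rw [w.map_mul, w.map_mul, hzpow, hC, hcompat, hcompat, v.map_mul, smul_add]
  have hvx : ∀ i k : ℕ, k ≤ n → (0 : WithTop ℤ) ≤ v ((Nat.choose k i : K) * φ.coeff k) := by
    intro i k hk
    rw [v.map_mul]
    exact add_nonneg (hvnat _) (hvcoeff k hk)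
  -- valuation of ρ_i is the min of the term valuations
  have hrho : ∀ i : ℕ, 1 ≤ i → w (rho φ α n i) =
      (Finset.Icc i n).inf (fun k =>
        w ((Nat.choose k i : L) * algebraMap K L (φ.coeff k) * α ^ ((k : ℤ) - (n : ℤ)))) := by
    intro i hi
    rw [rho]
    apply stmt8_addval_sum_eq_inf
    intro k hk k' hk' hne heq
    by_contra htop
    rw [Finset.mem_Icc] at hk hk'
    rw [hterm i k hi hk.2, hterm i k' hi hk'.2] at heq
    have hfin : v ((Nat.choose k i : K) * φ.coeff k) ≠ ⊤ := by
      intro h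
      apply htop
      rw [hterm i k hi hk.2, h, hsmul_top, top_add]
    have hfin' : v ((Nat.choose k' i : K) * φ.coeff k') ≠ ⊤ := by
      intro h
      apply htop
      rw [hterm i k hi hk.2, heq, h, hsmul_top, top_add]
    obtain ⟨z, hz⟩ := WithTop.ne_top_iff_exists.mp hfin
    obtain ⟨z', hz'⟩ := WithTop.ne_top_iff_exists.mp hfin'
    rw [← hz, ← hz', hsmul_coe, hsmul_coe, ← WithTop.coe_add, ← WithTop.coe_add] at heq
    have heqz : (n : ℤ) * z + ((k : ℤ) - n) = (n : ℤ) * z' + ((k' : ℤ) - n) :=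
      WithTop.coe_inj.mp heq
    have hz0 : 0 ≤ z := by
      have := hvx i k hk.2
      rw [← hz] at this
      exact_mod_cast this
    have hz0' : 0 ≤ z' := by
      have := hvx i k' hk'.2
      rw [← hz'] at this
      exact_mod_cast this
    have hk1 : (1 : ℤ) ≤ (k : ℤ) := by exact_mod_cast le_trans hi hk.1
    have hk1' : (1 : ℤ) ≤ (k' : ℤ) := by exact_mod_cast le_trans hi hk'.1
    have hkn : (k : ℤ) ≤ n := by exact_mod_cast hk.2
    have hkn' : (k' : ℤ) ≤ n := by exact_mod_cast hk'.2
    have hkk : (k : ℤ) ≠ (k' : ℤ) := by exact_mod_cast hne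
    have hn1 : (1 : ℤ) ≤ (n : ℤ) := by exact_mod_cast hn
    rcases lt_trichotomy z z' with h | h | h
    · have : (n : ℤ) * 1 ≤ (n : ℤ) * (z' - z) :=
        mul_le_mul_of_nonneg_left (by omega) (by omega)
      have hkk' : (k : ℤ) - k' = (n : ℤ) * (z' - z) := by ring_nf; linarith [heqz]
      nlinarith
    · rw [h] at heqz
      exact hkk (by omega)
    · have : (n : ℤ) * 1 ≤ (n : ℤ) * (z - z') :=
        mul_le_mul_of_nonneg_left (by omega) (by omega)
      have hkk' : (k' : ℤ) - k = (n : ℤ) * (z - z') := by ring_nf; linarith [heqz]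
      nlinarith
  -- basic consequences
  have hJcoe : w (rho φ α n (p ^ s)) = (J : WithTop ℤ) := hon.1
  have h1ps : 1 ≤ p ^ s := Nat.one_le_pow _ _ hp.pos
  have hps_le : p ^ s ≤ n := by
    by_contra h
    push_neg at h
    have hempty : Finset.Icc (p ^ s) n = ∅ := Finset.Icc_eq_empty (by omega)
    rw [hrho _ h1ps, hempty] at hJcoe
    simp at hJcoe
  have hrho_n : rho φ α n n = 1 := by
    rw [rho, Finset.Icc_self, Finset.sum_singleton, Nat.choose_self, hcoeff_n, sub_self,
      zpow_zero, map_one]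
    simp
  have hps_lt : p ^ s < n := by
    rcases eq_or_lt_of_le hps_le with h | h
    · exfalso
      rw [h, hrho_n, w.map_one] at hJcoe
      have : ((0 : ℤ) : WithTop ℤ) = ((J : ℤ) : WithTop ℤ) := by
        rw [← hJcoe]; simp
      have : (0 : ℤ) = J := WithTop.coe_inj.mp this
      omega
    · exact h
  obtain ⟨lam, hlam⟩ := hon.2
  have hlam' : ∀ i : ℕ, 1 ≤ i → i ≤ n → ∀ c : ℤ, w (rho φ α n i) = (c : WithTop ℤ) →
      (J : ℚ) + lam * ((i : ℚ) - ((p ^ s : ℕ) : ℚ)) ≤ (c : ℚ) := hlam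
  have hlamneg : lam < 0 := by
    have h0 : w (rho φ α n n) = ((0 : ℤ) : WithTop ℤ) := by
      rw [hrho_n, w.map_one]; simp
    have hle := hlam' n hn le_rfl 0 h0
    have hJ1 : (1 : ℚ) ≤ (J : ℚ) := by exact_mod_cast hJ
    have hd : (0 : ℚ) < (n : ℚ) - ((p ^ s : ℕ) : ℚ) := by
      have : ((p ^ s : ℕ) : ℚ) < (n : ℚ) := by exact_mod_cast hps_lt
      linarith
    rw [Int.cast_zero] at hle
    by_contra hcon
    push_neg at hcon
    nlinarith [mul_nonneg hcon (le_of_lt hd)]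
  -- the hull contradiction tool
  have hull : ∀ i : ℕ, 1 ≤ i → i < p ^ s → ¬ (w (rho φ α n i) ≤ (J : WithTop ℤ)) := by
    intro i h1 h2 hle
    obtain ⟨c, hc, hcJ⟩ := WithTop.le_coe_iff.mp hle
    have hineq := hlam' i h1 (le_trans (le_of_lt h2) hps_le) c hc
    have hd : ((i : ℚ) - ((p ^ s : ℕ) : ℚ)) < 0 := by
      have : (i : ℚ) < ((p ^ s : ℕ) : ℚ) := by exact_mod_cast h2
      linarith
    have hcJ' : (c : ℚ) ≤ (J : ℚ) := by exact_mod_cast hcJ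
    have hpos : 0 < lam * ((i : ℚ) - ((p ^ s : ℕ) : ℚ)) := mul_pos_of_neg_of_neg hlamneg hd
    linarith
  -- upper bound through any single term
  have hub : ∀ i k : ℕ, 1 ≤ i → i ≤ k → k ≤ n → w (rho φ α n i) ≤
      w ((Nat.choose k i : L) * algebraMap K L (φ.coeff k) * α ^ ((k : ℤ) - (n : ℤ))) := by
    intro i k h1 h2 h3
    rw [hrho i h1]
    exact Finset.inf_le (Finset.mem_Icc.mpr ⟨h2, h3⟩)
  -- step 1 : s ≤ v_p(n)
  have hsm : s ≤ padicValNat p n := by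
    by_contra h
    push_neg at h
    have hpm_dvd : p ^ padicValNat p n ∣ n := pow_padicValNat_dvd
    have hpm_le : p ^ padicValNat p n ≤ n := Nat.le_of_dvd hn hpm_dvd
    have h1m : 1 ≤ p ^ padicValNat p n := Nat.one_le_pow _ _ hp.pos
    have hlt : p ^ padicValNat p n < p ^ s := Nat.pow_lt_pow_right hp.one_lt h
    have hv0 : v ((Nat.choose n (p ^ padicValNat p n) : ℕ) : K) = 0 :=
      hvcop _ (stmt8_kummer_not_dvd hp hn)
    have hterm0 : w ((Nat.choose n (p ^ padicValNat p n) : L) * algebraMap K L (φ.coeff n) *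
        α ^ ((n : ℤ) - (n : ℤ))) = ((0 : ℤ) : WithTop ℤ) := by
      rw [hterm _ n h1m le_rfl, v.map_mul, hv0, hcoeff_n, v.map_one, add_zero, smul_zero,
        zero_add]
      simp
    refine hull (p ^ padicValNat p n) h1m hlt ?_
    calc w (rho φ α n (p ^ padicValNat p n)) ≤ _ := hub _ n h1m hpm_le le_rfl
      _ = ((0 : ℤ) : WithTop ℤ) := hterm0
      _ ≤ (J : WithTop ℤ) := WithTop.coe_le_coe.mpr (le_of_lt hJ)
  have hpsn : (p : ℤ) ^ s ∣ (n : ℤ) := by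
    have : (p : ℕ) ^ s ∣ n := (pow_dvd_pow p hsm).trans pow_padicValNat_dvd
    exact_mod_cast Int.natCast_dvd_natCast.mpr this
  -- the term attaining the minimum for i = p^s
  have hne : (Finset.Icc (p ^ s) n).Nonempty := Finset.nonempty_Icc.mpr hps_le
  obtain ⟨k0, hk0mem, hk0inf⟩ := Finset.exists_mem_eq_inf (Finset.Icc (p ^ s) n) hne
    (fun k => w ((Nat.choose k (p ^ s) : L) * algebraMap K L (φ.coeff k) *
      α ^ ((k : ℤ) - (n : ℤ))))
  rw [Finset.mem_Icc] at hk0mem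
  have hk0_1 : 1 ≤ k0 := le_trans h1ps hk0mem.1
  have hk0J : w ((Nat.choose k0 (p ^ s) : L) * algebraMap K L (φ.coeff k0) *
      α ^ ((k0 : ℤ) - (n : ℤ))) = (J : WithTop ℤ) := by
    rw [← hk0inf, ← hrho _ h1ps]
    exact hJcoe
  rw [hterm _ k0 h1ps hk0mem.2, v.map_mul] at hk0J
  have hCne : v ((Nat.choose k0 (p ^ s) : ℕ) : K) ≠ ⊤ := by
    intro h
    rw [h, top_add, hsmul_top, top_add] at hk0J
    exact WithTop.coe_ne_top hk0J.symm
  have hφne : v (φ.coeff k0) ≠ ⊤ := by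
    intro h
    rw [h, add_top, hsmul_top, top_add] at hk0J
    exact WithTop.coe_ne_top hk0J.symm
  obtain ⟨zc, hzc⟩ := WithTop.ne_top_iff_exists.mp hCne
  obtain ⟨zf, hzf⟩ := WithTop.ne_top_iff_exists.mp hφne
  rw [← hzc, ← hzf, ← WithTop.coe_add, hsmul_coe, ← WithTop.coe_add] at hk0J
  have hJeq : (n : ℤ) * (zc + zf) + ((k0 : ℤ) - n) = J := WithTop.coe_inj.mp hk0J
  have hzc0 : 0 ≤ zc := by
    have := hvnat (Nat.choose k0 (p ^ s))
    rw [← hzc] at this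
    exact_mod_cast this
  have hzf0 : 0 ≤ zf := by
    have := hvcoeff k0 hk0mem.2
    rw [← hzf] at this
    exact_mod_cast this
  -- case analysis on k0 = n or k0 < n
  rcases eq_or_lt_of_le hk0mem.2 with hk0n | hk0n
  · -- k0 = n :  n ∣ J
    subst hk0n
    have hJn : J = (k0 : ℤ) * (zc + zf) := by omega
    constructor
    · rw [hJn]
      exact Dvd.dvd.mul_right hpsn _
    · intro a b hJab hb0 hbn htlt
      exfalso
      have hbk : (k0 : ℤ) ∣ (b : ℤ) := ⟨zc + zf - a, by rw [hJn] at hJab; linarith [hJab]⟩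
      have hble : (k0 : ℤ) ≤ (b : ℤ) := Int.le_of_dvd (by exact_mod_cast hb0) hbk
      have : (b : ℤ) < (k0 : ℤ) := by exact_mod_cast hbn
      omega
  · -- k0 < n
    have hk0pos : 0 < k0 := hk0_1
    set t0 := padicValNat p k0 with ht0
    have hst0 : s ≤ t0 := by
      by_contra hcon
      push_neg at hcon
      have hpt0k : p ^ t0 ≤ k0 := Nat.le_of_dvd hk0pos pow_padicValNat_dvd
      have h1pt0 : 1 ≤ p ^ t0 := Nat.one_le_pow _ _ hp.pos
      have hptlt : p ^ t0 < p ^ s := Nat.pow_lt_pow_right hp.one_lt hcon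
      refine hull (p ^ t0) h1pt0 hptlt ?_
      have hterm1 : w ((Nat.choose k0 (p ^ t0) : L) * algebraMap K L (φ.coeff k0) *
          α ^ ((k0 : ℤ) - (n : ℤ))) = (((n : ℤ) * zf + ((k0 : ℤ) - n) : ℤ) : WithTop ℤ) := by
        rw [hterm _ k0 h1pt0 hk0mem.2, v.map_mul, hvcop _ (stmt8_kummer_not_dvd hp hk0pos),
          ← hzf, zero_add, hsmul_coe, ← WithTop.coe_add]
      calc w (rho φ α n (p ^ t0)) ≤ _ := hub _ k0 h1pt0 hpt0k hk0mem.2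
        _ = (((n : ℤ) * zf + ((k0 : ℤ) - n) : ℤ) : WithTop ℤ) := hterm1
        _ ≤ (J : WithTop ℤ) := by
            apply WithTop.coe_le_coe.mpr
            have : 0 ≤ (n : ℤ) * zc := mul_nonneg (by exact_mod_cast hn.le) hzc0
            nlinarith [hJeq]
    have hk0dvd : (p : ℤ) ^ s ∣ (k0 : ℤ) := by
      have : (p : ℕ) ^ s ∣ k0 := (pow_dvd_pow p hst0).trans pow_padicValNat_dvd
      exact_mod_cast Int.natCast_dvd_natCast.mpr this
    constructor
    · have hJ2 : J = (n : ℤ) * (zc + zf - 1) + k0 := by linarith [hJeq]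
      rw [hJ2]
      exact dvd_add (Dvd.dvd.mul_right hpsn _) hk0dvd
    · intro a b hJab hb0 hbn htlt
      exfalso
      -- b = k0
      have hd : (n : ℤ) ∣ ((k0 : ℤ) - b) := ⟨a - (zc + zf - 1), by rw [hJab] at hJeq; ring_nf; linarith [hJeq]⟩
      have hbk0 : (b : ℤ) = (k0 : ℤ) := by
        obtain ⟨q, hq⟩ := hd
        have h1 : (k0 : ℤ) < n := by exact_mod_cast hk0n
        have h2 : (b : ℤ) < n := by exact_mod_cast hbn
        have h3 : (0 : ℤ) < b := by exact_mod_cast hb0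
        have h4 : (0 : ℤ) < k0 := by exact_mod_cast hk0pos
        have hn' : (0 : ℤ) < n := by exact_mod_cast hn
        rcases lt_trichotomy q 0 with hq0 | hq0 | hq0
        · have h5 : (n : ℤ) * q ≤ (n : ℤ) * (-1) := mul_le_mul_of_nonneg_left (by omega) (by omega)
          have h6 : (n : ℤ) * (-1) = -(n : ℤ) := by ring
          omega
        · rw [hq0, mul_zero] at hq
          omega
        · have h5 : (n : ℤ) * 1 ≤ (n : ℤ) * q := mul_le_mul_of_nonneg_left (by omega) (by omega)
          have h6 : (n : ℤ) * 1 = (n : ℤ) := by ring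
          omega
      have hbk0' : b = k0 := by exact_mod_cast hbk0
      rw [hbk0'] at htlt
      omega
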